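/- arXiv:2003.08106 — 2 statements merged into one kernel-verified Lean document; each statement's English description precedes it below -/
import Mathlib

section
/- With q_ε as above, for all t > 0 one has t·q_ε'(t) ≥ (1/4)·q_ε(t)²/t. -/
open Real intervalIntegral

theorem weight_deriv_vs_square
    (χ : ℝ → ℝ) (hχC1 : ContDiff ℝ 1 χ)
    (hχ01 : ∀ t, χ t ∈ Set.Icc (0 : ℝ) 1)
    (hχ1 : ∀ t : ℝ, |t| ≤ 1 → χ t = 1)
    (hχ0 : ∀ t : ℝ, 2 ≤ |t| → χ t = 0)
    (hχ' : ∀ t, t * deriv χ t ≤ 0)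
    (ε : ℝ) (hε : 0 < ε)
    (q : ℝ → ℝ)
    (hq : ∀ t, q t = ∫ s in (0:ℝ)..t, (χ (ε * s) + (1 - χ (ε * s)) / (ε * s))) :
    ∀ t > 0, ∀ d : ℝ, HasDerivAt q d t → t * d ≥ (1 / 4) * (q t) ^ 2 / t := by
  intro t ht d hd
  set f : ℝ → ℝ := fun s => χ (ε * s) + (1 - χ (ε * s)) / (ε * s) with hf_def
  have hχa : ∀ s, 0 ≤ χ s := fun s => (hχ01 s).1
  have hχb : ∀ s, χ s ≤ 1 := fun s => (hχ01 s).2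
  -- f = 1 on |s| ≤ 1/ε
  have hf1 : ∀ s : ℝ, |s| ≤ 1 / ε → f s = 1 := by
    intro s hs
    have h1 : |ε * s| ≤ 1 := by
      rw [abs_mul, abs_of_pos hε]
      calc ε * |s| ≤ ε * (1 / ε) := by nlinarith [abs_nonneg s]
        _ = 1 := by field_simp
    simp [hf_def, hχ1 _ h1]
  -- continuity of f
  have hcont : Continuous f := by
    rw [continuous_iff_continuousAt]
    intro x
    rcases eq_or_ne x 0 with rfl | hx
    · have heq : f =ᶠ[nhds (0 : ℝ)] fun _ => (1 : ℝ) := by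
        filter_upwards [Metric.ball_mem_nhds (0 : ℝ) (by positivity : (0:ℝ) < 1 / ε)] with s hs
        exact hf1 s (le_of_lt (by simpa [Real.dist_eq] using hs))
      exact continuousAt_const.congr heq.symm
    · have hεx : ε * x ≠ 0 := mul_ne_zero hε.ne' hx
      have hc1 : ContinuousAt (fun s : ℝ => χ (ε * s)) x :=
        (hχC1.continuous.continuousAt).comp ((continuous_const.mul continuous_id).continuousAt)
      exact hc1.add (((continuousAt_const.sub hc1)).div
        ((continuous_const.mul continuous_id).continuousAt) hεx)
  have hq' : q = fun u => ∫ s in (0:ℝ)..u, f s := funext hq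
  -- derivative
  have hderiv : HasDerivAt q (f t) t := by
    rw [hq']
    exact intervalIntegral.integral_hasDerivAt_right (hcont.intervalIntegrable _ _)
      (hcont.stronglyMeasurableAtFilter _ _) hcont.continuousAt
  have hd' : d = f t := hd.unique hderiv
  -- f ≤ 1 on [0,∞)
  have hf_le_one : ∀ s : ℝ, 0 ≤ s → f s ≤ 1 := by
    intro s hs
    rcases le_or_gt (ε * s) 1 with h | h
    · rw [hf1 s (by rw [abs_of_nonneg hs]; rw [le_div_iff₀ hε]; linarith [mul_comm ε s])]
    · have h1 : (1 - χ (ε * s)) / (ε * s) ≤ 1 - χ (ε * s) :=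
        div_le_self (by linarith [hχb (ε * s)]) h.le
      have := hχa (ε * s)
      simp only [hf_def]
      linarith
  -- f ≥ 0 on [0,∞)
  have hf_nonneg : ∀ s : ℝ, 0 ≤ s → 0 ≤ f s := by
    intro s hs
    have h1 : 0 ≤ (1 - χ (ε * s)) / (ε * s) :=
      div_nonneg (by linarith [hχb (ε * s)]) (by positivity)
    have := hχa (ε * s)
    simp only [hf_def]
    linarith
  -- lower bound on t * f t
  have hlb : min t (1 / ε) ≤ t * f t := by
    rcases le_or_gt (ε * t) 1 with h | h
    · rw [hf1 t (by rw [abs_of_pos ht, le_div_iff₀ hε]; linarith [mul_comm ε t]), mul_one]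
      exact min_le_left _ _
    · have hεt : (0:ℝ) < ε * t := by positivity
      have h1 : χ (ε * t) / (ε * t) ≤ χ (ε * t) := div_le_self (hχa _) h.le
      have h2 : 1 / (ε * t) = χ (ε * t) / (ε * t) + (1 - χ (ε * t)) / (ε * t) := by
        rw [← add_div]; norm_num
      have h3 : 1 / (ε * t) ≤ f t := by simp only [hf_def]; linarith
      have h4 : 1 / ε ≤ t * f t := by
        have := mul_le_mul_of_nonneg_left h3 ht.le
        calc (1:ℝ) / ε = t * (1 / (ε * t)) := by field_simp
          _ ≤ t * f t := this
      exact le_trans (min_le_right _ _) h4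
  -- q t ≤ t
  have hq_le : q t ≤ t := by
    rw [hq']
    calc (∫ s in (0:ℝ)..t, f s) ≤ ∫ _s in (0:ℝ)..t, (1:ℝ) := by
          apply intervalIntegral.integral_mono_on ht.le (hcont.intervalIntegrable _ _)
            intervalIntegrable_const
          intro s hs; exact hf_le_one s hs.1
      _ = t := by simp
  have hq_nonneg : 0 ≤ q t := by
    rw [hq']
    apply intervalIntegral.integral_nonneg ht.le
    intro s hs; exact hf_nonneg s hs.1
  rcases le_or_gt t (2 / ε) with hcase | hcase
  · -- small t case
    have htε : t * ε ≤ 2 := (le_div_iff₀ hε).mp hcase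
    have hmin : t / 2 ≤ min t (1 / ε) := by
      apply le_min (by linarith)
      rw [div_le_div_iff₀ (by norm_num) hε]
      linarith
    rw [ge_iff_le, div_le_iff₀ ht, hd']
    nlinarith [hlb, hq_le, hq_nonneg, hmin]
  · -- large t case
    have h2ε : (0:ℝ) < 2 / ε := by positivity
    have hεt2 : (2:ℝ) ≤ ε * t := by
      rw [div_lt_iff₀ hε] at hcase; linarith [mul_comm ε t]
    -- split the integral
    have hsplit : q t = (∫ s in (0:ℝ)..(2/ε), f s) + ∫ s in (2/ε)..t, f s := by
      rw [hq']
      exact (intervalIntegral.integral_add_adjacent_intervals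
        (hcont.intervalIntegrable _ _) (hcont.intervalIntegrable _ _)).symm
    have hI1 : (∫ s in (0:ℝ)..(2/ε), f s) ≤ 2 / ε := by
      calc (∫ s in (0:ℝ)..(2/ε), f s) ≤ ∫ _s in (0:ℝ)..(2/ε), (1:ℝ) := by
            apply intervalIntegral.integral_mono_on h2ε.le (hcont.intervalIntegrable _ _)
              intervalIntegrable_const
            intro s hs; exact hf_le_one s hs.1
        _ = 2 / ε := by simp
    have hI2 : (∫ s in (2/ε)..t, f s) = ε⁻¹ * Real.log (t / (2 / ε)) := by
      have hcg : (∫ s in (2/ε)..t, f s) = ∫ s in (2/ε)..t, ε⁻¹ * s⁻¹ := by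
        apply intervalIntegral.integral_congr
        intro s hs
        rw [Set.uIcc_of_le hcase.le] at hs
        have hs1 : 2 / ε ≤ s := hs.1
        have hs2 : (2:ℝ) ≤ ε * s := by
          rw [div_le_iff₀ hε] at hs1; linarith [mul_comm ε s]
        have hχz : χ (ε * s) = 0 := hχ0 _ (by rw [abs_of_nonneg (by linarith : (0:ℝ) ≤ ε * s)]; exact hs2)
        have hsne : (ε * s : ℝ) ≠ 0 := by positivity
        simp only [hf_def, hχz, sub_zero, one_div, mul_inv]
        ring
      rw [hcg, intervalIntegral.integral_const_mul, integral_inv]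
      rw [Set.uIcc_of_le hcase.le]
      intro hmem
      exact absurd hmem.1 (not_le.mpr h2ε)
    have hlog : Real.log (t / (2 / ε)) ≤ Real.log (ε * t) := by
      have he : t / (2 / ε) = ε * t / 2 := by field_simp
      rw [he]
      apply Real.log_le_log (by positivity)
      linarith
    have hqB : q t ≤ (2 + Real.log (ε * t)) / ε := by
      rw [hsplit]
      have : ε⁻¹ * Real.log (t / (2 / ε)) ≤ ε⁻¹ * Real.log (ε * t) :=
        mul_le_mul_of_nonneg_left hlog (by positivity)
      rw [hI2]
      have : (2:ℝ)/ε + ε⁻¹ * Real.log (ε * t) = (2 + Real.log (ε * t)) / ε := by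
        field_simp
      linarith [hI1, mul_le_mul_of_nonneg_left hlog (by positivity : (0:ℝ) ≤ ε⁻¹)]
    -- key inequality (2 + log s)^2 ≤ 4 s for s ≥ 1
    have key : (2 + Real.log (ε * t)) ^ 2 ≤ 4 * (ε * t) := by
      set s := ε * t with hs
      have h0 : (0:ℝ) < s := by positivity
      have h1 : (1:ℝ) ≤ s := by linarith
      have hsq : Real.log s = 2 * Real.log (Real.sqrt s) := by
        rw [Real.log_sqrt h0.le]; ring
      have hls : Real.log (Real.sqrt s) ≤ Real.sqrt s - 1 :=
        Real.log_le_sub_one_of_pos (Real.sqrt_pos.mpr h0)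
      have h2 : 2 + Real.log s ≤ 2 * Real.sqrt s := by rw [hsq]; linarith
      have h3 : 0 ≤ 2 + Real.log s := by linarith [Real.log_nonneg h1]
      nlinarith [Real.sq_sqrt h0.le, Real.sqrt_nonneg s]
    have hlogpos : 0 ≤ 2 + Real.log (ε * t) := by
      have : (1:ℝ) ≤ ε * t := by linarith
      linarith [Real.log_nonneg this]
    -- t * d ≥ 1/ε
    have h1εt : 1 / ε ≤ t := by
      rw [div_le_iff₀ hε]; nlinarith
    have htd : 1 / ε ≤ t * d := by
      rw [hd']
      exact le_trans (le_min h1εt le_rfl) hlb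
    rw [ge_iff_le, div_le_iff₀ ht]
    -- need (1/4) q^2 ≤ t * d * t; have q ≤ B/ε with B^2 ≤ 4εt, td ≥ 1/ε
    have hq2 : (q t) ^ 2 ≤ 4 * t / ε := by
      have h1 : (q t) ^ 2 ≤ ((2 + Real.log (ε * t)) / ε) ^ 2 := by
        apply pow_le_pow_left₀ hq_nonneg hqB
      calc (q t) ^ 2 ≤ ((2 + Real.log (ε * t)) / ε) ^ 2 := h1
        _ = (2 + Real.log (ε * t)) ^ 2 / ε ^ 2 := by rw [div_pow]
        _ ≤ 4 * (ε * t) / ε ^ 2 := by gcongr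
        _ = 4 * t / ε := by field_simp
    have e1 : 4 * t / ε = 4 * (t / ε) := by ring
    have h1 : 1 / 4 * q t ^ 2 ≤ t / ε := by linarith
    have h2 : t / ε = t * (1 / ε) := by ring
    have h3 : t * (1 / ε) ≤ t * (t * d) := mul_le_mul_of_nonneg_left htd ht.le
    nlinarith [h1, h3]
end

section
/- Fix 0 < δ < 1 and x, y, ξ, η ∈ ℝⁿ. If |ξ/⟨ξ⟩ − η/⟨η⟩| > δ or |x − y| > δ, then |ξ − η|² + ⟨ξ⟩⟨η⟩|x − y|² ≥ (δ²/16)(⟨ξ⟩ + ⟨η⟩)². -/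
set_option maxHeartbeats 1000000 in
theorem phase_space_separation
    (n : ℕ) (δ : ℝ) (hδ0 : 0 < δ) (hδ1 : δ < 1)
    (x y ξ η : EuclideanSpace ℝ (Fin n))
    (jap : EuclideanSpace ℝ (Fin n) → ℝ)
    (hjap : ∀ ζ, jap ζ = Real.sqrt (1 + ‖ζ‖ ^ 2))
    (h : ‖(jap ξ)⁻¹ • ξ - (jap η)⁻¹ • η‖ > δ ∨ ‖x - y‖ > δ) :
    ‖ξ - η‖ ^ 2 + jap ξ * jap η * ‖x - y‖ ^ 2 ≥
      (δ ^ 2 / 16) * (jap ξ + jap η) ^ 2 := by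
  have key : ∀ ζ : EuclideanSpace ℝ (Fin n),
      jap ζ ^ 2 = 1 + ‖ζ‖ ^ 2 ∧ 1 ≤ jap ζ ∧ ‖ζ‖ ≤ jap ζ := by
    intro ζ
    have h0 : (0:ℝ) ≤ 1 + ‖ζ‖ ^ 2 := by positivity
    have hsq : jap ζ ^ 2 = 1 + ‖ζ‖ ^ 2 := by rw [hjap]; exact Real.sq_sqrt h0
    have hnn : 0 ≤ jap ζ := by rw [hjap]; exact Real.sqrt_nonneg _
    refine ⟨hsq, ?_, ?_⟩
    · nlinarith [norm_nonneg ζ]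
    · nlinarith [norm_nonneg ζ]
  obtain ⟨hsa, ha1, hξa⟩ := key ξ
  obtain ⟨hsb, hb1, hηb⟩ := key η
  set a := jap ξ with hadef
  set b := jap η with hbdef
  have ha0 : (0:ℝ) < a := lt_of_lt_of_le one_pos ha1
  have hb0 : (0:ℝ) < b := lt_of_lt_of_le one_pos hb1
  set d := ‖ξ - η‖ with hd
  have hd0 : (0:ℝ) ≤ d := norm_nonneg _
  have hn1 : ‖ξ‖ ≤ ‖η‖ + d := by
    have := norm_sub_norm_le ξ η
    linarith
  have hn2 : ‖η‖ ≤ ‖ξ‖ + d := by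
    have := norm_sub_norm_le η ξ
    rw [norm_sub_rev] at this
    linarith
  have hab : |a - b| ≤ d := by
    rw [abs_sub_le_iff]
    constructor
    · nlinarith [norm_nonneg ξ, norm_nonneg η, mul_le_mul_of_nonneg_right hηb hd0]
    · nlinarith [norm_nonneg ξ, norm_nonneg η, mul_le_mul_of_nonneg_right hξa hd0]
  rcases h with h1 | h2
  · -- frequency separation case
    have hinv : |a⁻¹ - b⁻¹| ≤ d / (a * b) := by
      have heq : a⁻¹ - b⁻¹ = (b - a) / (a * b) := by field_simp
      rw [heq, abs_div, abs_of_pos (mul_pos ha0 hb0)]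
      gcongr
      rw [abs_sub_comm]; exact hab
    have bound1 : δ < 2 * d / a := by
      have hidl : a⁻¹ • ξ - b⁻¹ • η = a⁻¹ • (ξ - η) + (a⁻¹ - b⁻¹) • η := by module
      have := norm_add_le (a⁻¹ • (ξ - η)) ((a⁻¹ - b⁻¹) • η)
      rw [← hidl] at this
      rw [norm_smul, norm_smul, Real.norm_eq_abs, Real.norm_eq_abs,
        abs_of_pos (inv_pos.mpr ha0)] at this
      have hterm : |a⁻¹ - b⁻¹| * ‖η‖ ≤ (d / (a * b)) * b :=
        mul_le_mul hinv hηb (norm_nonneg _) (by positivity)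
      have h2d : a⁻¹ * d + (d / (a * b)) * b = 2 * d / a := by
        field_simp; ring
      calc δ < ‖a⁻¹ • ξ - b⁻¹ • η‖ := h1
        _ ≤ a⁻¹ * ‖ξ - η‖ + |a⁻¹ - b⁻¹| * ‖η‖ := this
        _ ≤ a⁻¹ * d + (d / (a * b)) * b := by rw [← hd]; linarith
        _ = 2 * d / a := h2d
    have bound2 : δ < 2 * d / b := by
      have hidl : a⁻¹ • ξ - b⁻¹ • η = b⁻¹ • (ξ - η) + (a⁻¹ - b⁻¹) • ξ := by module
      have := norm_add_le (b⁻¹ • (ξ - η)) ((a⁻¹ - b⁻¹) • ξ)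
      rw [← hidl] at this
      rw [norm_smul, norm_smul, Real.norm_eq_abs, Real.norm_eq_abs,
        abs_of_pos (inv_pos.mpr hb0)] at this
      have hterm : |a⁻¹ - b⁻¹| * ‖ξ‖ ≤ (d / (a * b)) * a :=
        mul_le_mul hinv hξa (norm_nonneg _) (by positivity)
      have h2d : b⁻¹ * d + (d / (a * b)) * a = 2 * d / b := by
        field_simp; ring
      calc δ < ‖a⁻¹ • ξ - b⁻¹ • η‖ := h1
        _ ≤ b⁻¹ * ‖ξ - η‖ + |a⁻¹ - b⁻¹| * ‖ξ‖ := this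
        _ ≤ b⁻¹ * d + (d / (a * b)) * a := by rw [← hd]; linarith
        _ = 2 * d / b := h2d
    have hda : δ * a < 2 * d := (lt_div_iff₀ ha0).mp bound1
    have hdb : δ * b < 2 * d := (lt_div_iff₀ hb0).mp bound2
    have h4 : δ * (a + b) < 4 * d := by linarith
    have hpos : 0 ≤ δ * (a + b) := by positivity
    have hsq : δ * (a + b) * (δ * (a + b)) ≤ 4 * d * (4 * d) :=
      mul_self_le_mul_self hpos h4.le
    have hr2 : 0 ≤ a * b * ‖x - y‖ ^ 2 := by positivity
    have hfin : δ ^ 2 * (a + b) ^ 2 ≤ 16 * d ^ 2 := by nlinarith [hsq]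
    linarith [hfin, hr2]
  · -- spatial separation case
    have hr : δ ^ 2 ≤ ‖x - y‖ ^ 2 := by
      nlinarith [norm_nonneg (x - y)]
    have habs : (a - b) ^ 2 ≤ d ^ 2 := by
      have := mul_self_le_mul_self (abs_nonneg (a - b)) hab
      rw [abs_mul_abs_self] at this
      nlinarith
    have hrr : a * b * δ ^ 2 ≤ a * b * ‖x - y‖ ^ 2 :=
      mul_le_mul_of_nonneg_left hr (by positivity)
    have hint1 : 0 ≤ (16 - δ ^ 2) * (a - b) ^ 2 :=
      mul_nonneg (by nlinarith) (sq_nonneg (a - b))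
    have hint2 : 0 ≤ a * b * δ ^ 2 :=
      mul_nonneg (mul_pos ha0 hb0).le (sq_nonneg δ)
    nlinarith [habs, hrr, hint1, hint2]
end
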